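/- In the category FI(n) of [n]-weighted finite sets with weight-non-decreasing injections, there exists a morphism from the object b = (b_1,...,b_n) to the object a = (a_1,...,a_n) (where the i-th coordinate records the number of elements of weight i) if and only if the reversed tuple (b_n,...,b_1) is less than or equal to (a_n,...,a_1) in the dominance order, i.e., b_n + ... + b_{n-i+1} ≤ a_n + ... + a_{n-i+1} for each i = 1,...,n. -/

import Mathlib

open Finset

private def Nsum {n : ℕ} (c : Fin n → ℕ) (m : ℕ) : ℕ :=
  ∑ i ∈ Finset.univ.filter (fun i : Fin n => m ≤ i.val), c i

private lemma Nsum_eq {n : ℕ} (c : Fin n → ℕ) (k : Fin n) :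
    Nsum c k.val = ∑ i ∈ Finset.univ.filter (fun i : Fin n => k ≤ i), c i := by
  rfl

private lemma Nsum_succ {n : ℕ} (c : Fin n → ℕ) (k : Fin n) :
    Nsum c k.val = c k + Nsum c (k.val + 1) := by
  unfold Nsum
  have h : Finset.univ.filter (fun i : Fin n => k.val ≤ i.val)
      = insert k (Finset.univ.filter (fun i : Fin n => k.val + 1 ≤ i.val)) := by
    ext i
    simp only [mem_filter, mem_univ, true_and, mem_insert]
    constructor
    · intro hi
      rcases eq_or_lt_of_le hi with h | h
      · left; exact (Fin.ext h.symm)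
      · right; omega
    · rintro (rfl | hi) <;> omega
  rw [h, Finset.sum_insert]
  simp

private lemma Nsum_anti {n : ℕ} (c : Fin n → ℕ) {m m' : ℕ} (h : m ≤ m') :
    Nsum c m' ≤ Nsum c m := by
  apply Finset.sum_le_sum_of_subset
  intro i hi
  simp only [mem_filter, mem_univ, true_and] at hi ⊢
  omega

private lemma Nsum_zero_of_ge {n : ℕ} (c : Fin n → ℕ) {m : ℕ} (h : n ≤ m) :
    Nsum c m = 0 := by
  unfold Nsum
  have he : Finset.univ.filter (fun i : Fin n => m ≤ i.val) = ∅ := by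
    ext i
    simp only [mem_filter, mem_univ, true_and, notMem_empty, iff_false]
    have := i.isLt
    omega
  rw [he, Finset.sum_empty]

private lemma rank_inj {n : ℕ} (c : Fin n → ℕ) {x y : Σ i : Fin n, Fin (c i)}
    (h : Nsum c (x.1.val + 1) + x.2.val = Nsum c (y.1.val + 1) + y.2.val) : x = y := by
  obtain ⟨i, j⟩ := x
  obtain ⟨i', j'⟩ := y
  simp only at h
  have key : ∀ (i i' : Fin n) (j : Fin (c i)) (j' : Fin (c i')), i.val < i'.val →
      Nsum c (i.val + 1) + j.val ≠ Nsum c (i'.val + 1) + j'.val := by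
    intro i i' j j' hlt heq
    have h1 : Nsum c i'.val ≤ Nsum c (i.val + 1) := Nsum_anti c (by omega)
    have h2 : Nsum c i'.val = c i' + Nsum c (i'.val + 1) := Nsum_succ c i'
    have := j'.isLt
    omega
  rcases lt_trichotomy i.val i'.val with hlt | heq | hgt
  · exact absurd h (key i i' j j' hlt)
  · have : i = i' := Fin.ext heq
    subst this
    have : j = j' := Fin.ext (by omega)
    rw [this]
  · exact absurd h.symm (key i' i j' j hgt)

private lemma card_filter_sigma {n : ℕ} (c : Fin n → ℕ) (k : Fin n) :
    (Finset.univ.filter fun x : Σ i : Fin n, Fin (c i) => k ≤ x.1).card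
      = ∑ i ∈ Finset.univ.filter (fun i : Fin n => k ≤ i), c i := by
  rw [Finset.card_filter]
  rw [← Finset.univ_sigma_univ, Finset.sum_sigma, Finset.sum_filter]
  congr 1
  ext i
  by_cases h : k ≤ i <;> simp [h]

theorem fiN_morphism_exists_iff_dominance (n : ℕ) (hn : 1 ≤ n) (a b : Fin n → ℕ) :
    (∃ φ : (Σ i : Fin n, Fin (b i)) → (Σ i : Fin n, Fin (a i)),
        Function.Injective φ ∧ ∀ x, x.1 ≤ (φ x).1) ↔
      ∀ k : Fin n,
        ∑ i ∈ Finset.univ.filter (fun i : Fin n => k ≤ i), b i ≤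
          ∑ i ∈ Finset.univ.filter (fun i : Fin n => k ≤ i), a i := by
  constructor
  · rintro ⟨φ, hinj, hw⟩ k
    rw [← card_filter_sigma b k, ← card_filter_sigma a k]
    apply Finset.card_le_card_of_injOn φ
    · intro x hx
      simp only [Finset.mem_coe, mem_filter, mem_univ, true_and] at hx ⊢
      exact le_trans hx (hw x)
    · exact fun x _ y _ h => hinj h
  · intro H
    have H' : ∀ k : Fin n, Nsum b k.val ≤ Nsum a k.val := by
      intro k; rw [Nsum_eq, Nsum_eq]; exact H k
    -- total bound
    have htot : Nsum b 0 ≤ Nsum a 0 := by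
      have := H' ⟨0, hn⟩
      simpa using this
    -- for each x, the rank is < Nsum a x.1
    have hrank : ∀ x : Σ i : Fin n, Fin (b i),
        Nsum b (x.1.val + 1) + x.2.val < Nsum a x.1.val := by
      intro x
      have h1 : Nsum b x.1.val = b x.1 + Nsum b (x.1.val + 1) := Nsum_succ b x.1
      have h2 := H' x.1
      have := x.2.isLt
      omega
    -- define φ
    have hne : ∀ x : Σ i : Fin n, Fin (b i),
        (Finset.univ.filter fun i : Fin n =>
          Nsum b (x.1.val + 1) + x.2.val < Nsum a i.val).Nonempty := by
      intro x
      refine ⟨x.1, ?_⟩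
      simp only [mem_filter, mem_univ, true_and]
      exact hrank x
    set r : (Σ i : Fin n, Fin (b i)) → ℕ := fun x => Nsum b (x.1.val + 1) + x.2.val with hr
    set idx : (Σ i : Fin n, Fin (b i)) → Fin n := fun x =>
      (Finset.univ.filter fun i : Fin n => r x < Nsum a i.val).max' (hne x) with hidx
    have hidx_mem : ∀ x, r x < Nsum a (idx x).val := by
      intro x
      have := Finset.max'_mem _ (hne x)
      simpa [hidx] using this
    have hidx_ge : ∀ x (i : Fin n), r x < Nsum a i.val → i ≤ idx x := by
      intro x i hi
      apply Finset.le_max'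
      simp only [mem_filter, mem_univ, true_and]
      exact hi
    have hidx_upper : ∀ x, Nsum a ((idx x).val + 1) ≤ r x := by
      intro x
      by_contra hcon
      push_neg at hcon
      by_cases hlt : (idx x).val + 1 < n
      · have := hidx_ge x ⟨(idx x).val + 1, hlt⟩ hcon
        have h5 : (idx x).val + 1 ≤ (idx x).val := Fin.le_def.mp this
        omega
      · have : Nsum a ((idx x).val + 1) = 0 := Nsum_zero_of_ge a (by omega)
        omega
    have hj : ∀ x, r x - Nsum a ((idx x).val + 1) < a (idx x) := by
      intro x
      have h1 := hidx_mem x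
      have h2 := hidx_upper x
      have h3 : Nsum a (idx x).val = a (idx x) + Nsum a ((idx x).val + 1) :=
        Nsum_succ a (idx x)
      omega
    refine ⟨fun x => ⟨idx x, ⟨r x - Nsum a ((idx x).val + 1), hj x⟩⟩, ?_, ?_⟩
    · intro x y hxy
      have hx1 : Nsum a ((idx x).val + 1) + (r x - Nsum a ((idx x).val + 1)) = r x :=
        Nat.add_sub_cancel' (hidx_upper x)
      have hy1 : Nsum a ((idx y).val + 1) + (r y - Nsum a ((idx y).val + 1)) = r y :=
        Nat.add_sub_cancel' (hidx_upper y)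
      have hreq : r x = r y := by
        have h1 := congrArg (fun z : Σ i : Fin n, Fin (a i) =>
          Nsum a (z.1.val + 1) + z.2.val) hxy
        simp only at h1
        omega
      exact rank_inj b hreq
    · intro x
      exact hidx_ge x x.1 (hrank x)
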